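/- Consider the scalar time-varying system ẋ(t) = −α(t)·x(t) on Ω = [−1, 1], where α : ℝ₊ → ℝ₊ is a class-K function (continuous, strictly increasing, with α(0) = 0). Then: (i) the system is ST with ℓ(τ) = α(τ): for every τ > 0, every t₁ ≥ 0, every t₂ ≥ t₁, and any two solutions u, v : [t₁, ∞) → [−1, 1] of ẋ = −α(t)x, one has |u(t₂+τ) − v(t₂+τ)| ≤ exp(−α(τ)·(t₂−t₁))·|u(t₁) − v(t₁)|; but (ii) the system is not contractive: for every c > 0 there exist t₂ ≥ t₁ ≥ 0 and solutions u, v of ẋ = −α(t)x with values in [−1, 1] such that |u(t₂) − v(t₂)| > exp(−c(t₂−t₁))·|u(t₁) − v(t₁)|. -/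

import Mathlib

open MeasureTheory Filter Topology
private lemma ftc_aux (β : ℝ → ℝ) (hβ : Continuous β) (a t : ℝ) :
    HasDerivAt (fun x => ∫ s in a..x, β s) (β t) t :=
  intervalIntegral.integral_hasDerivAt_right (hβ.intervalIntegrable a t)
    (hβ.stronglyMeasurableAtFilter _ _) hβ.continuousAt

private lemma sol_eq (β : ℝ → ℝ) (hβ : Continuous β) (t₁ b : ℝ) (hb : t₁ ≤ b)
    (w : ℝ → ℝ)
    (hw : ∀ t ∈ Set.Icc t₁ b, HasDerivWithinAt w (-β t * w t) (Set.Ici t₁) t) :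
    w b = w t₁ * Real.exp (-∫ s in t₁..b, β s) := by
  set A : ℝ → ℝ := fun x => ∫ s in t₁..x, β s with hA
  have hAc : Continuous A := by
    rw [continuous_iff_continuousAt]; exact fun x => (ftc_aux β hβ t₁ x).continuousAt
  have key : ∀ x ∈ Set.Icc t₁ b, w x * Real.exp (A x) = w t₁ * Real.exp (A t₁) := by
    apply constant_of_has_deriv_right_zero
    · intro x hx
      exact ((hw x hx).continuousWithinAt.mono Set.Icc_subset_Ici_self).mul
        ((Real.continuous_exp.comp hAc).continuousAt.continuousWithinAt)
    · intro x hx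
      have h1 : HasDerivWithinAt w (-β x * w x) (Set.Ici x) x :=
        (hw x ⟨hx.1, hx.2.le⟩).mono (Set.Ici_subset_Ici.mpr hx.1)
      have h2 : HasDerivWithinAt (fun y => Real.exp (A y)) (Real.exp (A x) * β x)
          (Set.Ici x) x := ((ftc_aux β hβ t₁ x).exp).hasDerivWithinAt
      have h3 := h1.mul h2
      exact h3.congr_deriv (by ring)
  have hg := key b ⟨hb, le_rfl⟩
  have hA1 : A t₁ = 0 := intervalIntegral.integral_same
  rw [hA1, Real.exp_zero, mul_one] at hg
  rw [Real.exp_neg, eq_mul_inv_iff_mul_eq₀ (Real.exp_ne_zero _)]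
  exact hg

/-- For the scalar system `ẋ = −α(t)x` on `Ω = [−1,1]`, with `α` a
class-K function, the system is ST with `ℓ(τ) = α(τ)`, but it is not contractive. -/
theorem scalar_classK_st_not_contractive (α : ℝ → ℝ)
    (hα0 : α 0 = 0)
    (hαcont : ContinuousOn α (Set.Ici 0))
    (hαmono : StrictMonoOn α (Set.Ici 0)) :
    -- (i) ST with ℓ(τ) = α(τ)
    ((∀ τ > (0:ℝ), ∀ t₁ ≥ (0:ℝ), ∀ t₂ ≥ t₁, ∀ u v : ℝ → ℝ,
        (∀ t ≥ t₁, u t ∈ Set.Icc (-1:ℝ) 1 ∧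
          HasDerivWithinAt u (-α t * u t) (Set.Ici t₁) t) →
        (∀ t ≥ t₁, v t ∈ Set.Icc (-1:ℝ) 1 ∧
          HasDerivWithinAt v (-α t * v t) (Set.Ici t₁) t) →
        |u (t₂ + τ) - v (t₂ + τ)| ≤ Real.exp (-α τ * (t₂ - t₁)) * |u t₁ - v t₁|) ∧
     -- (ii) not contractive: no exponential rate c > 0 works
     (∀ c > (0:ℝ), ∃ t₁ t₂ : ℝ, 0 ≤ t₁ ∧ t₁ ≤ t₂ ∧ ∃ u v : ℝ → ℝ,
        (∀ t ≥ t₁, u t ∈ Set.Icc (-1:ℝ) 1 ∧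
          HasDerivWithinAt u (-α t * u t) (Set.Ici t₁) t) ∧
        (∀ t ≥ t₁, v t ∈ Set.Icc (-1:ℝ) 1 ∧
          HasDerivWithinAt v (-α t * v t) (Set.Ici t₁) t) ∧
        Real.exp (-c * (t₂ - t₁)) * |u t₁ - v t₁| < |u t₂ - v t₂|)) := by
  set β : ℝ → ℝ := fun t => α (max t 0) with hβdef
  have hβcont : Continuous β := by
    apply continuousOn_univ.mp
    exact hαcont.comp (continuous_id.max continuous_const).continuousOn
      (fun x _ => Set.mem_Ici.mpr (le_max_right x 0))
  have hmono := hαmono.monotoneOn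
  have hβnonneg : ∀ t, 0 ≤ β t := by
    intro t
    have := hmono (Set.mem_Ici.mpr le_rfl) (Set.mem_Ici.mpr (le_max_right t 0))
      (le_max_right t 0)
    rwa [hα0] at this
  have hβeq : ∀ t, 0 ≤ t → β t = α t := by
    intro t ht; simp [hβdef, max_eq_left ht]
  constructor
  · -- Part (i)
    intro τ hτ t₁ ht₁ t₂ ht₂ u v hu hv
    set w : ℝ → ℝ := fun t => u t - v t with hwdef
    have hb : t₁ ≤ t₂ + τ := le_trans ht₂ (by linarith)
    have hw : ∀ t ∈ Set.Icc t₁ (t₂ + τ), HasDerivWithinAt w (-β t * w t) (Set.Ici t₁) t := by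
      intro t ht
      have h3 := ((hu t ht.1).2).sub ((hv t ht.1).2)
      exact h3.congr_deriv (by rw [hβeq t (le_trans ht₁ ht.1)]; ring)
    have hkey := sol_eq β hβcont t₁ (t₂ + τ) hb w hw
    have hint : α τ * (t₂ - t₁) ≤ ∫ s in t₁..t₂ + τ, β s := by
      have hsplit : (∫ s in t₁..t₁ + τ, β s) + ∫ s in t₁ + τ..t₂ + τ, β s
          = ∫ s in t₁..t₂ + τ, β s :=
        intervalIntegral.integral_add_adjacent_intervals
          (hβcont.intervalIntegrable _ _) (hβcont.intervalIntegrable _ _)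
      have h1 : 0 ≤ ∫ s in t₁..t₁ + τ, β s :=
        intervalIntegral.integral_nonneg (by linarith) (fun s _ => hβnonneg s)
      have h2 : ∫ s in t₁ + τ..t₂ + τ, (fun _ => α τ) s ≤ ∫ s in t₁ + τ..t₂ + τ, β s := by
        apply intervalIntegral.integral_mono_on (by linarith) intervalIntegrable_const
          (hβcont.intervalIntegrable _ _)
        intro s hs
        have hs0 : (0:ℝ) ≤ s := by linarith [hs.1]
        rw [hβeq s hs0]
        exact hmono (Set.mem_Ici.mpr hτ.le) (Set.mem_Ici.mpr hs0) (by linarith [hs.1])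
      rw [intervalIntegral.integral_const, smul_eq_mul] at h2
      nlinarith
    have habs : |w (t₂ + τ)| = |w t₁| * Real.exp (-∫ s in t₁..t₂ + τ, β s) := by
      rw [hkey, abs_mul, abs_of_pos (Real.exp_pos _)]
    show |w (t₂ + τ)| ≤ Real.exp (-α τ * (t₂ - t₁)) * |w t₁|
    rw [habs, mul_comm]
    exact mul_le_mul_of_nonneg_right (Real.exp_le_exp.mpr (by nlinarith)) (abs_nonneg _)
  · -- Part (ii)
    intro c hc
    have hev : ∀ᶠ t in 𝓝[>] (0:ℝ), α t < c := by
      have h0 : ContinuousWithinAt α (Set.Ici 0) 0 := hαcont 0 Set.self_mem_Ici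
      have ht : Tendsto α (𝓝[Set.Ici 0] (0:ℝ)) (𝓝 0) := by
        simpa [ContinuousWithinAt, hα0] using h0
      have hev' : ∀ᶠ t in 𝓝[Set.Ici 0] (0:ℝ), α t < c := ht (Iio_mem_nhds hc)
      exact hev'.filter_mono (nhdsWithin_mono _ Set.Ioi_subset_Ici_self)
    obtain ⟨δ, hδc, hδ0⟩ := (hev.and self_mem_nhdsWithin).exists
    set A : ℝ → ℝ := fun t => ∫ s in (0:ℝ)..t, β s with hAdef
    have hApos : ∀ t, 0 ≤ t → 0 ≤ A t := fun t ht =>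
      intervalIntegral.integral_nonneg ht (fun s _ => hβnonneg s)
    refine ⟨0, δ, le_rfl, hδ0.le, fun t => Real.exp (-A t), fun _ => 0, ?_, ?_, ?_⟩
    · intro t ht
      constructor
      · constructor
        · linarith [Real.exp_pos (-A t)]
        · rw [Real.exp_le_one_iff]; linarith [hApos t ht]
      · have hd : HasDerivAt (fun t => Real.exp (-A t)) (Real.exp (-A t) * (-β t)) t :=
          ((ftc_aux β hβcont 0 t).neg).exp
        have := hd.hasDerivWithinAt (s := Set.Ici 0)
        exact this.congr_deriv (by rw [hβeq t ht]; ring)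
    · intro t ht
      refine ⟨by constructor <;> norm_num, ?_⟩
      rw [mul_zero]
      exact hasDerivWithinAt_const _ _ _
    · have hA0 : A 0 = 0 := intervalIntegral.integral_same
      have hAδ : A δ ≤ α δ * δ := by
        have h2 : ∫ s in (0:ℝ)..δ, β s ≤ ∫ s in (0:ℝ)..δ, (fun _ => α δ) s := by
          apply intervalIntegral.integral_mono_on hδ0.le (hβcont.intervalIntegrable _ _)
            intervalIntegrable_const
          intro s hs
          rw [hβeq s hs.1]
          exact hmono (Set.mem_Ici.mpr hs.1) (Set.mem_Ici.mpr (hs.1.trans hs.2)) hs.2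
        rw [intervalIntegral.integral_const, smul_eq_mul] at h2
        nlinarith
      have hlt : -c * (δ - 0) < -A δ := by nlinarith
      simp only [sub_zero, hA0, neg_zero, Real.exp_zero, abs_one, mul_one]
      rw [abs_of_pos (Real.exp_pos _)]
      exact Real.exp_lt_exp.mpr (by linarith)
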